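/- Fix σ > 0. For every integer k ≥ 1 there exists a constant C_k < ∞, depending only on k and σ (and not on y or λ), such that for all λ ∈ ℝ and y ∈ ℝ, a random variable T with distribution Texp(λ, y) satisfies E Tᵏ ≤ C_k (|y|ᵏ + |λ|ᵏ + 1). -/

import Mathlib

open MeasureTheory Set

/-- The `N(0, σ²)` density. -/
noncomputable def gpdf (σ x : ℝ) : ℝ :=
  (Real.sqrt (2 * Real.pi * σ ^ 2))⁻¹ * Real.exp (-x ^ 2 / (2 * σ ^ 2))

/-- The normalizing constant of the tilted exponential distribution `Texp(λ, y)`. -/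
noncomputable def Z1 (σ lam y : ℝ) : ℝ :=
  ∫ u in Set.Ioi (0 : ℝ), Real.exp (-(1 - lam) * u) * gpdf σ (u - y)

/-- The density of the tilted exponential distribution `Texp(λ, y)` on `[0, ∞)`. -/
noncomputable def texpDens (σ lam y u : ℝ) : ℝ :=
  Real.exp (-(1 - lam) * u) * gpdf σ (u - y) / Z1 σ lam y

lemma aux_two_pow {x y : ℝ} (hx : 0 ≤ x) (hy : 0 ≤ y) (k : ℕ) :
    (x + y) ^ k ≤ 2 ^ k * (x ^ k + y ^ k) := by
  have hm : x + y ≤ 2 * max x y := by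
    rcases le_total x y with h | h
    · rw [max_eq_right h]; linarith
    · rw [max_eq_left h]; linarith
  have hmk : (max x y) ^ k ≤ x ^ k + y ^ k := by
    rcases le_total x y with h | h
    · rw [max_eq_right h]; linarith [pow_nonneg hx k]
    · rw [max_eq_left h]; linarith [pow_nonneg hy k]
  calc (x + y) ^ k ≤ (2 * max x y) ^ k := by
        apply pow_le_pow_left₀ (by linarith) hm
    _ = 2 ^ k * (max x y) ^ k := mul_pow _ _ _
    _ ≤ 2 ^ k * (x ^ k + y ^ k) := by
        apply mul_le_mul_of_nonneg_left hmk (by positivity)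

lemma aux_three_pow {a b : ℝ} (ha : 0 ≤ a) (hb : 0 ≤ b) (k : ℕ) :
    (a + b + 1) ^ k ≤ 3 ^ k * (a ^ k + b ^ k + 1) := by
  set m := max (max a b) 1 with hm
  have h1 : 1 ≤ m := le_max_right _ _
  have hA : a ≤ m := le_trans (le_max_left a b) (le_max_left _ _)
  have hB : b ≤ m := le_trans (le_max_right a b) (le_max_left _ _)
  have hsum : a + b + 1 ≤ 3 * m := by linarith
  have hmk : m ^ k ≤ a ^ k + b ^ k + 1 := by
    rcases max_cases (max a b) 1 with ⟨h, _⟩ | ⟨h, _⟩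
    · rcases max_cases a b with ⟨h2, _⟩ | ⟨h2, _⟩
      · rw [hm, h, h2]; linarith [pow_nonneg hb k]
      · rw [hm, h, h2]; linarith [pow_nonneg ha k]
    · rw [hm, h, one_pow]; linarith [pow_nonneg ha k, pow_nonneg hb k]
  calc (a + b + 1) ^ k ≤ (3 * m) ^ k := pow_le_pow_left₀ (by linarith) hsum k
    _ = 3 ^ k * m ^ k := mul_pow _ _ _
    _ ≤ 3 ^ k * (a ^ k + b ^ k + 1) := by
        apply mul_le_mul_of_nonneg_left hmk (by positivity)

lemma aux_poly_exp {t : ℝ} (ht : 0 ≤ t) {k : ℕ} (hk : 1 ≤ k) :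
    t ^ k ≤ (2 * k) ^ k * Real.exp (t / 2) := by
  have hkR : (1:ℝ) ≤ (k:ℝ) := by exact_mod_cast hk
  have hk0 : (0:ℝ) < 2 * k := by linarith
  have h1 : t / (2 * k) ≤ Real.exp (t / (2 * k)) := by
    linarith [Real.add_one_le_exp (t / (2 * k))]
  have h2 : t ≤ 2 * k * Real.exp (t / (2 * k)) := by
    have := mul_le_mul_of_nonneg_right h1 hk0.le
    rw [div_mul_cancel₀ _ hk0.ne'] at this
    linarith
  calc t ^ k ≤ (2 * k * Real.exp (t / (2 * k))) ^ k := pow_le_pow_left₀ ht h2 k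
    _ = (2 * k) ^ k * (Real.exp (t / (2 * k))) ^ k := mul_pow _ _ _
    _ = (2 * k) ^ k * Real.exp (t / 2) := by
        rw [← Real.exp_nat_mul]
        congr 1
        field_simp


set_option maxHeartbeats 1000000 in
/-- Moment bounds for the tilted exponential distribution: for every `k ≥ 1` there is a
constant `C_k` (depending only on `k` and `σ`) with `E Tᵏ ≤ C_k (|y|ᵏ + |λ|ᵏ + 1)` for
`T ~ Texp(λ, y)`, for all `λ, y ∈ ℝ`. -/
theorem texp_moment_bound (σ : ℝ) (hσ : 0 < σ) (k : ℕ) (hk : 1 ≤ k) :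
    ∃ C : ℝ, ∀ lam y : ℝ,
      (∫ u in Set.Ioi (0 : ℝ), u ^ k * texpDens σ lam y u) ≤
        C * (|y| ^ k + |lam| ^ k + 1) := by
  refine ⟨(1 + 2 * 2 ^ k) * (3 * (2 * σ ^ 2 + 1)) ^ k + 2 * 2 ^ k * (2 * (k:ℝ)) ^ k,
    fun lam y => ?_⟩
  set c : ℝ := (Real.sqrt (2 * Real.pi * σ ^ 2))⁻¹ with hc
  have hσ2 : (0:ℝ) < 2 * σ ^ 2 := by positivity
  have hcpos : 0 < c := by
    rw [hc, inv_pos]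
    exact Real.sqrt_pos.2 (by positivity)
  set a : ℝ := lam - 1 with ha
  set g : ℝ → ℝ := fun u => a * u - (u - y) ^ 2 / (2 * σ ^ 2) with hg
  set n : ℝ → ℝ := fun u => Real.exp (-(1 - lam) * u) * gpdf σ (u - y) with hn
  have hng : ∀ u, n u = c * Real.exp (g u) := by
    intro u
    rw [hn]
    show Real.exp (-(1 - lam) * u) * (c * Real.exp (-(u - y) ^ 2 / (2 * σ ^ 2))) = _
    rw [mul_left_comm, ← Real.exp_add]
    congr 2
    rw [hg]; ring
  set m : ℝ := y + a * σ ^ 2 with hm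
  set d : ℝ := a * y + a ^ 2 * σ ^ 2 / 2 with hd
  have hgm : ∀ u, g u = -(2 * σ ^ 2)⁻¹ * (u - m) ^ 2 + d := by
    intro u
    rw [hg, hm, hd]
    field_simp
    ring
  have hn_eq : n = fun u => (c * Real.exp d) * Real.exp (-(2 * σ ^ 2)⁻¹ * (u - m) ^ 2) := by
    funext u
    rw [hng u, hgm u, Real.exp_add]
    ring
  have hIntn : Integrable n := by
    rw [hn_eq]
    exact ((integrable_exp_neg_mul_sq (by positivity : (0:ℝ) < (2 * σ ^ 2)⁻¹)).comp_sub_right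
      m).const_mul _
  have hnpos : ∀ u, 0 < n u := fun u => by rw [hng u]; positivity
  have hdens : ∀ u, texpDens σ lam y u = n u / Z1 σ lam y := fun u => rfl
  have hZ1 : Z1 σ lam y = ∫ v in Ioi (0:ℝ), n v := rfl
  clear_value g n m d a
  set A : ℝ := |y| + σ ^ 2 * (1 + |a|) with hA
  have hA0 : 0 < A := by rw [hA]; positivity
  set B : ℝ := A + 1 with hB
  have hB0 : 0 < B := by linarith
  have hkey : ∀ v u : ℝ, A ≤ v → v ≤ u → g u + (u - v) ≤ g v := by
    intro v u hAv hvu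
    have h1 : g v - g u = (u - v) * ((u + v - 2 * y) / (2 * σ ^ 2) - a) := by
      rw [hg]
      field_simp
      ring
    have h2 : 1 ≤ (u + v - 2 * y) / (2 * σ ^ 2) - a := by
      rw [le_sub_iff_add_le, le_div_iff₀ hσ2]
      have h3 : a ≤ |a| := le_abs_self a
      have h4 : y ≤ |y| := le_abs_self y
      have h5 : A ≤ u := le_trans hAv hvu
      rw [hA] at hAv h5
      nlinarith [abs_nonneg a, abs_nonneg y]
    have h6 : u - v ≤ (u - v) * ((u + v - 2 * y) / (2 * σ ^ 2) - a) :=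
      le_mul_of_one_le_right (sub_nonneg.2 hvu) h2
    linarith
  have hZlow : ∀ u : ℝ, B ≤ u → c * Real.exp (g u + (u - B)) ≤ Z1 σ lam y := by
    intro u hu
    have hsub : Ioc A B ⊆ Ioi (0:ℝ) := fun v hv => lt_trans hA0 hv.1
    have step1 : ∫ v in Ioc A B, c * Real.exp (g u + (u - B)) ≤ ∫ v in Ioc A B, n v := by
      apply setIntegral_mono_on
      · exact integrableOn_const measure_Ioc_lt_top.ne
      · exact hIntn.integrableOn
      · exact measurableSet_Ioc
      · intro v hv
        obtain ⟨hv1, hv2⟩ := hv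
        rw [hng v]
        have hgv : g u + (u - B) ≤ g v := by
          have := hkey v u hv1.le (le_trans hv2 hu)
          linarith
        exact mul_le_mul_of_nonneg_left (Real.exp_le_exp.2 hgv) hcpos.le
    have step2 : ∫ v in Ioc A B, n v ≤ ∫ v in Ioi (0:ℝ), n v := by
      apply setIntegral_mono_set hIntn.integrableOn
      · exact Filter.Eventually.of_forall fun v => (hnpos v).le
      · exact HasSubset.Subset.eventuallyLE hsub
    have hval : ∫ v in Ioc A B, c * Real.exp (g u + (u - B)) = c * Real.exp (g u + (u - B)) := by
      rw [setIntegral_const, Real.volume_real_Ioc, smul_eq_mul]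
      rw [show B - A = 1 by rw [hB]; ring]
      norm_num
    rw [hZ1]
    calc c * Real.exp (g u + (u - B)) = ∫ v in Ioc A B, c * Real.exp (g u + (u - B)) := hval.symm
      _ ≤ ∫ v in Ioc A B, n v := step1
      _ ≤ ∫ v in Ioi (0:ℝ), n v := step2
  have hZpos : 0 < Z1 σ lam y := by
    refine lt_of_lt_of_le ?_ (hZlow B le_rfl)
    positivity
  have hdnonneg : ∀ u, 0 ≤ texpDens σ lam y u := fun u => by
    rw [hdens]; exact div_nonneg (hnpos u).le hZpos.le
  have hfb : ∀ u, B ≤ u → texpDens σ lam y u ≤ Real.exp (B - u) := by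
    intro u hu
    rw [hdens, div_le_iff₀ hZpos]
    calc n u = Real.exp (B - u) * (c * Real.exp (g u + (u - B))) := by
          rw [hng u, mul_left_comm, ← Real.exp_add]
          congr 2
          ring
      _ ≤ Real.exp (B - u) * Z1 σ lam y :=
          mul_le_mul_of_nonneg_left (hZlow u hu) (Real.exp_nonneg _)
  have hcont : Continuous (fun u => texpDens σ lam y u) := by
    unfold texpDens gpdf
    apply Continuous.div_const
    fun_prop
  have hIntd : IntegrableOn (fun u => texpDens σ lam y u) (Ioi (0:ℝ)) := by
    have heq : (fun u => texpDens σ lam y u) = fun u => n u / Z1 σ lam y := funext hdens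
    rw [heq]
    exact (hIntn.div_const _).integrableOn
  have hone : ∫ u in Ioi (0:ℝ), texpDens σ lam y u = 1 := by
    have heq : (fun u => texpDens σ lam y u) = fun u => n u / Z1 σ lam y := funext hdens
    rw [heq, integral_div, ← hZ1, div_self hZpos.ne']
  -- first piece
  have hP1 : ∫ u in Ioc (0:ℝ) B, u ^ k * texpDens σ lam y u ≤ B ^ k := by
    have hcont2 : Continuous (fun u : ℝ => u ^ k * texpDens σ lam y u) :=
      (continuous_pow k).mul hcont
    have s1 : ∫ u in Ioc (0:ℝ) B, u ^ k * texpDens σ lam y u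
        ≤ ∫ u in Ioc (0:ℝ) B, B ^ k * texpDens σ lam y u := by
      apply setIntegral_mono_on hcont2.integrableOn_Ioc
        ((continuous_const.mul hcont).integrableOn_Ioc) measurableSet_Ioc
      intro u hu
      exact mul_le_mul_of_nonneg_right (pow_le_pow_left₀ hu.1.le hu.2 k) (hdnonneg u)
    have s3 : ∫ u in Ioc (0:ℝ) B, texpDens σ lam y u ≤ 1 := by
      rw [← hone]
      apply setIntegral_mono_set hIntd
        (Filter.Eventually.of_forall fun u => hdnonneg u)
      exact HasSubset.Subset.eventuallyLE fun u hu => hu.1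
    rw [integral_const_mul] at s1
    have hBk : (0:ℝ) ≤ B ^ k := by positivity
    nlinarith
  -- tail pointwise bound
  set D : ℝ := 2 ^ k * ((2 * (k:ℝ)) ^ k + B ^ k) with hD
  have htail : ∀ u ∈ Ioi B, u ^ k * texpDens σ lam y u ≤ D * Real.exp ((B - u) / 2) := by
    intro u hu
    have huB : B ≤ u := (Set.mem_Ioi.1 hu).le
    have h0u : (0:ℝ) ≤ u := le_trans hB0.le huB
    have e1 : u ^ k ≤ 2 ^ k * ((u - B) ^ k + B ^ k) := by
      have h := aux_two_pow (sub_nonneg.2 huB) hB0.le k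
      have huu : u - B + B = u := by ring
      rwa [huu] at h
    have e2 : (u - B) ^ k ≤ (2 * (k:ℝ)) ^ k * Real.exp ((u - B) / 2) :=
      aux_poly_exp (sub_nonneg.2 huB) hk
    have e3 : Real.exp (B - u) ≤ Real.exp ((B - u) / 2) := Real.exp_le_exp.2 (by linarith)
    have e4 : Real.exp ((u - B) / 2) * Real.exp (B - u) = Real.exp ((B - u) / 2) := by
      rw [← Real.exp_add]; congr 1; ring
    calc u ^ k * texpDens σ lam y u ≤ u ^ k * Real.exp (B - u) :=
          mul_le_mul_of_nonneg_left (hfb u huB) (pow_nonneg h0u k)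
      _ ≤ (2 ^ k * ((2 * (k:ℝ)) ^ k * Real.exp ((u - B) / 2) + B ^ k)) * Real.exp (B - u) := by
          apply mul_le_mul_of_nonneg_right _ (Real.exp_nonneg _)
          refine le_trans e1 ?_
          apply mul_le_mul_of_nonneg_left (add_le_add e2 le_rfl) (by positivity)
      _ = 2 ^ k * (2 * (k:ℝ)) ^ k * (Real.exp ((u - B) / 2) * Real.exp (B - u))
            + 2 ^ k * B ^ k * Real.exp (B - u) := by ring
      _ = 2 ^ k * (2 * (k:ℝ)) ^ k * Real.exp ((B - u) / 2)
            + 2 ^ k * B ^ k * Real.exp (B - u) := by rw [e4]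
      _ ≤ 2 ^ k * (2 * (k:ℝ)) ^ k * Real.exp ((B - u) / 2)
            + 2 ^ k * B ^ k * Real.exp ((B - u) / 2) := by
          have hnn : (0:ℝ) ≤ 2 ^ k * B ^ k := by positivity
          nlinarith [mul_le_mul_of_nonneg_left e3 hnn]
      _ = D * Real.exp ((B - u) / 2) := by rw [hD]; ring
  -- tail integrability and value
  have heqexp : (fun u : ℝ => Real.exp ((B - u) / 2))
      = fun u : ℝ => Real.exp (B / 2) * Real.exp (-2⁻¹ * u) := by
    funext u
    rw [← Real.exp_add]
    congr 1
    ring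
  have hexpInt : IntegrableOn (fun u : ℝ => Real.exp ((B - u) / 2)) (Ioi B) := by
    rw [heqexp]
    exact ((exp_neg_integrableOn_Ioi B (by norm_num : (0:ℝ) < 2⁻¹)).const_mul _)
  have hDInt : IntegrableOn (fun u : ℝ => D * Real.exp ((B - u) / 2)) (Ioi B) :=
    hexpInt.const_mul D
  have hDnn : (0:ℝ) ≤ D := by rw [hD]; positivity
  have hint2 : IntegrableOn (fun u : ℝ => u ^ k * texpDens σ lam y u) (Ioi B) := by
    apply Integrable.mono hDInt (((continuous_pow k).mul hcont).aestronglyMeasurable.restrict)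
    rw [ae_restrict_iff' measurableSet_Ioi]
    refine Filter.Eventually.of_forall fun u hu => ?_
    have h0u : (0:ℝ) ≤ u := le_trans hB0.le (Set.mem_Ioi.1 hu).le
    simp only [Pi.mul_apply]
    rw [Real.norm_eq_abs, Real.norm_eq_abs,
      abs_of_nonneg (mul_nonneg (pow_nonneg h0u k) (hdnonneg u)),
      abs_of_nonneg (mul_nonneg hDnn (Real.exp_nonneg _))]
    exact htail u hu
  have hint1 : IntegrableOn (fun u : ℝ => u ^ k * texpDens σ lam y u) (Ioc (0:ℝ) B) :=
    ((continuous_pow k).mul hcont).integrableOn_Ioc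
  -- value of the tail integral
  have hvalexp : ∫ u in Ioi B, Real.exp ((B - u) / 2) = 2 := by
    rw [heqexp, integral_const_mul]
    simp_rw [neg_mul]
    have h2 : ∫ u in Ioi B, Real.exp (-(2⁻¹ * u)) = (2⁻¹:ℝ)⁻¹ • ∫ x in Ioi (2⁻¹ * B), Real.exp (-x) :=
      integral_comp_mul_left_Ioi (fun x => Real.exp (-x)) B (by norm_num : (0:ℝ) < 2⁻¹)
    rw [h2, integral_exp_neg_Ioi, smul_eq_mul, show ((2:ℝ)⁻¹)⁻¹ = 2 by norm_num,
      mul_left_comm, ← Real.exp_add, show B / 2 + -(2⁻¹ * B) = 0 by ring, Real.exp_zero,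
      mul_one]
  have hP2 : ∫ u in Ioi B, u ^ k * texpDens σ lam y u ≤ 2 * D := by
    calc ∫ u in Ioi B, u ^ k * texpDens σ lam y u
        ≤ ∫ u in Ioi B, D * Real.exp ((B - u) / 2) :=
          setIntegral_mono_on hint2 hDInt measurableSet_Ioi htail
      _ = D * ∫ u in Ioi B, Real.exp ((B - u) / 2) := integral_const_mul _ _
      _ = 2 * D := by rw [hvalexp]; ring
  -- split
  have hsplit : ∫ u in Ioi (0:ℝ), u ^ k * texpDens σ lam y u
      = (∫ u in Ioc (0:ℝ) B, u ^ k * texpDens σ lam y u)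
        + ∫ u in Ioi B, u ^ k * texpDens σ lam y u := by
    rw [← Ioc_union_Ioi_eq_Ioi hB0.le,
      setIntegral_union (Ioc_disjoint_Ioi le_rfl) measurableSet_Ioi hint1 hint2]
  -- final arithmetic
  set t : ℝ := |y| ^ k + |lam| ^ k + 1 with ht
  have ht1 : (1:ℝ) ≤ t := by
    rw [ht]
    have := pow_nonneg (abs_nonneg y) k
    have := pow_nonneg (abs_nonneg lam) k
    linarith
  have hBk : B ^ k ≤ (3 * (2 * σ ^ 2 + 1)) ^ k * t := by
    have h7 : |lam - 1| ≤ |lam| + 1 := by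
      rw [sub_eq_add_neg]
      calc |lam + -1| ≤ |lam| + |(-1:ℝ)| := abs_add_le lam (-1)
        _ = |lam| + 1 := by rw [abs_neg, abs_one]
    have hBle : B ≤ (2 * σ ^ 2 + 1) * (|y| + |lam| + 1) := by
      rw [hB, hA, ha]
      nlinarith [abs_nonneg lam, abs_nonneg y, sq_nonneg σ, abs_nonneg (lam - 1)]
    calc B ^ k ≤ ((2 * σ ^ 2 + 1) * (|y| + |lam| + 1)) ^ k := pow_le_pow_left₀ hB0.le hBle k
      _ = (2 * σ ^ 2 + 1) ^ k * (|y| + |lam| + 1) ^ k := mul_pow _ _ _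
      _ ≤ (2 * σ ^ 2 + 1) ^ k * (3 ^ k * t) :=
          mul_le_mul_of_nonneg_left (aux_three_pow (abs_nonneg y) (abs_nonneg lam) k)
            (by positivity)
      _ = (3 * (2 * σ ^ 2 + 1)) ^ k * t := by rw [mul_pow]; ring
  have h8 : (0:ℝ) ≤ 2 * 2 ^ k * (2 * (k:ℝ)) ^ k := by positivity
  have h9 : (0:ℝ) ≤ 1 + 2 * 2 ^ k := by positivity
  calc ∫ u in Ioi (0:ℝ), u ^ k * texpDens σ lam y u
      = (∫ u in Ioc (0:ℝ) B, u ^ k * texpDens σ lam y u)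
        + ∫ u in Ioi B, u ^ k * texpDens σ lam y u := hsplit
    _ ≤ B ^ k + 2 * D := add_le_add hP1 hP2
    _ = (1 + 2 * 2 ^ k) * B ^ k + 2 * 2 ^ k * (2 * (k:ℝ)) ^ k := by rw [hD]; ring
    _ ≤ (1 + 2 * 2 ^ k) * ((3 * (2 * σ ^ 2 + 1)) ^ k * t)
        + 2 * 2 ^ k * (2 * (k:ℝ)) ^ k * t :=
        add_le_add (mul_le_mul_of_nonneg_left hBk h9) (le_mul_of_one_le_right h8 ht1)
    _ = ((1 + 2 * 2 ^ k) * (3 * (2 * σ ^ 2 + 1)) ^ k + 2 * 2 ^ k * (2 * (k:ℝ)) ^ k) * t := by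
        ring
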